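/- Let p1 < p2 < p3 be primes. Every square (a × a) with a > 2*p1*p2*p3 - (p1*p2 + p1*p3 + p2*p3) can be tiled with squares (p1 × p1), (p2 × p2), and (p3 × p3). -/

import Mathlib

/-- The `a1 × a2` grid of unit cells is partitioned by axis-aligned translated
copies of bricks from `bricks` placed at integer positions.  A placement
`(x, y, w, h)` covers cells `(i, j)` with `x ≤ i < x + w` and `y ≤ j < y + h`. -/
def Tiles (bricks : Finset (ℕ × ℕ)) (a1 a2 : ℕ) : Prop :=
  ∃ P : Finset (ℕ × ℕ × ℕ × ℕ),
    (∀ q ∈ P, (q.2.2.1, q.2.2.2) ∈ bricks ∧ q.1 + q.2.2.1 ≤ a1 ∧ q.2.1 + q.2.2.2 ≤ a2) ∧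
    (∀ i j : ℕ, i < a1 → j < a2 →
      ∃! q : ℕ × ℕ × ℕ × ℕ, q ∈ P ∧
        q.1 ≤ i ∧ i < q.1 + q.2.2.1 ∧ q.2.1 ≤ j ∧ j < q.2.1 + q.2.2.2)

/-- A rectangle both of whose sides are divisible by `d` is tiled by a plain grid
of `d × d` squares. -/
lemma tiles_grid (B : Finset (ℕ × ℕ)) (d a1 a2 : ℕ) (hd : 0 < d)
    (hB : (d, d) ∈ B) (h1 : d ∣ a1) (h2 : d ∣ a2) : Tiles B a1 a2 := by
  refine ⟨(Finset.range (a1 / d) ×ˢ Finset.range (a2 / d)).image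
      (fun p => (d * p.1, d * p.2, d, d)), ?_, ?_⟩
  · intro q hq
    simp only [Finset.mem_image, Finset.mem_product, Finset.mem_range] at hq
    obtain ⟨⟨i, j⟩, ⟨hi, hj⟩, rfl⟩ := hq
    refine ⟨hB, ?_, ?_⟩
    · calc d * i + d = d * (i + 1) := by ring
        _ ≤ d * (a1 / d) := Nat.mul_le_mul_left d hi
        _ = a1 := Nat.mul_div_cancel' h1
    · calc d * j + d = d * (j + 1) := by ring
        _ ≤ d * (a2 / d) := Nat.mul_le_mul_left d hj
        _ = a2 := Nat.mul_div_cancel' h2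
  · intro i j hi hj
    refine ⟨(d * (i / d), d * (j / d), d, d), ⟨?_, ?_, ?_, ?_, ?_⟩, ?_⟩
    · simp only [Finset.mem_image, Finset.mem_product, Finset.mem_range]
      exact ⟨(i / d, j / d), ⟨Nat.div_lt_div_of_lt_of_dvd h1 hi,
        Nat.div_lt_div_of_lt_of_dvd h2 hj⟩, rfl⟩
    · exact Nat.mul_div_le i d
    · have := Nat.lt_mul_div_succ i hd
      simpa [Nat.mul_succ] using this
    · exact Nat.mul_div_le j d
    · have := Nat.lt_mul_div_succ j hd
      simpa [Nat.mul_succ] using this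
    · rintro q ⟨hq, hx1, hx2, hy1, hy2⟩
      simp only [Finset.mem_image, Finset.mem_product, Finset.mem_range] at hq
      obtain ⟨⟨i', j'⟩, ⟨hi', hj'⟩, rfl⟩ := hq
      simp only at hx1 hx2 hy1 hy2 ⊢
      have e1 : i / d = i' := Nat.div_eq_of_lt_le (by linarith [hx1]) (by push_cast; nlinarith [hx2])
      have e2 : j / d = j' := Nat.div_eq_of_lt_le (by linarith [hy1]) (by push_cast; nlinarith [hy2])
      rw [e1, e2]

lemma tiles_add_horiz {B : Finset (ℕ × ℕ)} {a1 b1 a2 : ℕ}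
    (hA : Tiles B a1 a2) (hB : Tiles B b1 a2) : Tiles B (a1 + b1) a2 := by
  obtain ⟨P, hP1, hP2⟩ := hA
  obtain ⟨Q, hQ1, hQ2⟩ := hB
  refine ⟨P ∪ Q.image (fun q => (a1 + q.1, q.2)), ?_, ?_⟩
  · intro q hq
    rcases Finset.mem_union.1 hq with h | h
    · obtain ⟨h1, h2, h3⟩ := hP1 q h
      exact ⟨h1, by omega, h3⟩
    · simp only [Finset.mem_image] at h
      obtain ⟨r, hr, rfl⟩ := h
      obtain ⟨h1, h2, h3⟩ := hQ1 r hr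
      refine ⟨h1, ?_, h3⟩; dsimp only; omega
  · intro i j hi hj
    rcases Nat.lt_or_ge i a1 with h | h
    · obtain ⟨q, hq, huniq⟩ := hP2 i j h hj
      refine ⟨q, ⟨Finset.mem_union_left _ hq.1, hq.2⟩, ?_⟩
      rintro q' ⟨hq', hc⟩
      rcases Finset.mem_union.1 hq' with hm | hm
      · exact huniq q' ⟨hm, hc⟩
      · simp only [Finset.mem_image] at hm
        obtain ⟨r, hr, rfl⟩ := hm
        exfalso; dsimp only at hc; omega
    · have hi' : i - a1 < b1 := by omega
      obtain ⟨q, hq, huniq⟩ := hQ2 (i - a1) j hi' hj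
      refine ⟨(a1 + q.1, q.2), ⟨Finset.mem_union_right _
        (Finset.mem_image.2 ⟨q, hq.1, rfl⟩), by dsimp only; omega⟩, ?_⟩
      rintro q' ⟨hq', hc⟩
      rcases Finset.mem_union.1 hq' with hm | hm
      · have := (hP1 q' hm).2.1
        exfalso; omega
      · simp only [Finset.mem_image] at hm
        obtain ⟨r, hr, rfl⟩ := hm
        have : r = q := huniq r ⟨hr, by dsimp only at hc; omega⟩
        rw [this]

lemma tiles_add_vert {B : Finset (ℕ × ℕ)} {a1 a2 b2 : ℕ}
    (hA : Tiles B a1 a2) (hB : Tiles B a1 b2) : Tiles B a1 (a2 + b2) := by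
  obtain ⟨P, hP1, hP2⟩ := hA
  obtain ⟨Q, hQ1, hQ2⟩ := hB
  refine ⟨P ∪ Q.image (fun q => (q.1, a2 + q.2.1, q.2.2)), ?_, ?_⟩
  · intro q hq
    rcases Finset.mem_union.1 hq with h | h
    · obtain ⟨h1, h2, h3⟩ := hP1 q h
      exact ⟨h1, h2, by omega⟩
    · simp only [Finset.mem_image] at h
      obtain ⟨r, hr, rfl⟩ := h
      obtain ⟨h1, h2, h3⟩ := hQ1 r hr
      refine ⟨h1, h2, ?_⟩; dsimp only; omega
  · intro i j hi hj
    rcases Nat.lt_or_ge j a2 with h | h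
    · obtain ⟨q, hq, huniq⟩ := hP2 i j hi h
      refine ⟨q, ⟨Finset.mem_union_left _ hq.1, hq.2⟩, ?_⟩
      rintro q' ⟨hq', hc⟩
      rcases Finset.mem_union.1 hq' with hm | hm
      · exact huniq q' ⟨hm, hc⟩
      · simp only [Finset.mem_image] at hm
        obtain ⟨r, hr, rfl⟩ := hm
        exfalso; dsimp only at hc; omega
    · have hj' : j - a2 < b2 := by omega
      obtain ⟨q, hq, huniq⟩ := hQ2 i (j - a2) hi hj'
      refine ⟨(q.1, a2 + q.2.1, q.2.2), ⟨Finset.mem_union_right _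
        (Finset.mem_image.2 ⟨q, hq.1, rfl⟩), by dsimp only; omega⟩, ?_⟩
      rintro q' ⟨hq', hc⟩
      rcases Finset.mem_union.1 hq' with hm | hm
      · have := (hP1 q' hm).2.2
        exfalso; omega
      · simp only [Finset.mem_image] at hm
        obtain ⟨r, hr, rfl⟩ := hm
        have : r = q := huniq r ⟨hr, by dsimp only at hc; omega⟩
        rw [this]

/-- Chicken McNugget / Sylvester: every integer strictly above `a*b - a - b`
is a nonnegative combination of coprime `a` and `b`. -/
lemma rep2 (a b M : ℕ) (ha : 0 < a) (hb : 0 < b) (hco : Nat.Coprime a b)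
    (h : a * b < M + a + b) : ∃ u v : ℕ, M = a * u + b * v := by
  obtain ⟨s, t, hst⟩ : IsCoprime (a : ℤ) (b : ℤ) := by
    rw [Int.isCoprime_iff_gcd_eq_one]; exact_mod_cast hco
  set u : ℤ := (M * s) % b with hu
  have hb' : (0 : ℤ) < b := by exact_mod_cast hb
  have hu0 : 0 ≤ u := Int.emod_nonneg _ (by positivity)
  have hub : u < b := Int.emod_lt_of_pos _ hb'
  set k : ℤ := (M * s) / b with hk
  have hdecomp : u + b * k = M * s := by
    rw [hu, hk]; exact Int.emod_add_mul_ediv _ _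
  have key : (M : ℤ) - a * u = b * (M * t + a * k) := by
    have h1 : s * a + t * b = 1 := hst
    nlinarith [hdecomp, h1]
  have hV : 0 ≤ M * t + a * k := by
    nlinarith [key, hu0, hub, (by exact_mod_cast h : (a : ℤ) * b < M + a + b),
      (by exact_mod_cast ha : (0:ℤ) < a)]
  refine ⟨u.toNat, (M * t + a * k).toNat, ?_⟩
  have : (M : ℤ) = a * u.toNat + b * (M * t + a * k).toNat := by
    rw [Int.toNat_of_nonneg hu0, Int.toNat_of_nonneg hV]; linarith [key]
  exact_mod_cast this

/-- Frobenius-type representation for pairwise products of three pairwise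
coprime numbers: every integer strictly above `2abc - ab - ac - bc` is a
nonnegative combination of `bc`, `ac`, `ab`. -/
lemma rep3 (a b c N : ℕ) (ha : 0 < a) (hb : 0 < b) (hc : 0 < c)
    (hab : Nat.Coprime a b) (hac : Nat.Coprime a c) (hbc : Nat.Coprime b c)
    (h : 2 * (a * b * c) < N + (a * b + a * c + b * c)) :
    ∃ x y z : ℕ, N = x * (b * c) + y * (a * c) + z * (a * b) := by
  have habc : Nat.Coprime (a * b) c := Nat.Coprime.mul hac hbc
  obtain ⟨s, t, hst⟩ : IsCoprime ((a * b : ℕ) : ℤ) (c : ℤ) := by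
    rw [Int.isCoprime_iff_gcd_eq_one]; exact_mod_cast habc
  set z : ℤ := (N * s) % c with hz
  have hc' : (0 : ℤ) < c := by exact_mod_cast hc
  have hz0 : 0 ≤ z := Int.emod_nonneg _ (by positivity)
  have hzc : z < c := Int.emod_lt_of_pos _ hc'
  set k : ℤ := (N * s) / c with hk
  have hdecomp : z + c * k = N * s := by
    rw [hz, hk]; exact Int.emod_add_mul_ediv _ _
  push_cast at hst
  have key : (N : ℤ) - a * b * z = c * (N * t + a * b * k) := by
    linear_combination (-(a : ℤ) * (b : ℤ)) * hdecomp - (N : ℤ) * hst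
  set M : ℤ := N * t + a * b * k with hM
  have ha' : (0:ℤ) < a := by exact_mod_cast ha
  have hb' : (0:ℤ) < b := by exact_mod_cast hb
  have hbig : (a : ℤ) * b - a - b < M := by
    have h' : 2 * ((a:ℤ) * b * c) < N + (a * b + a * c + b * c) := by exact_mod_cast h
    by_contra hcon
    push_neg at hcon
    have e1 : (a:ℤ) * b * z ≤ a * b * (c - 1) :=
      mul_le_mul_of_nonneg_left (by linarith) (by positivity)
    have e2 : (c:ℤ) * M ≤ c * (a * b - a - b) :=
      mul_le_mul_of_nonneg_left hcon (le_of_lt hc')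
    nlinarith [key]
  have hM0 : 0 ≤ M := by nlinarith [hbig, ha', hb']
  obtain ⟨u, v, huv⟩ := rep2 a b M.toNat ha hb hab (by
    have := Int.toNat_of_nonneg hM0
    have : (a:ℤ) * b < M.toNat + a + b := by rw [this]; linarith [hbig]
    exact_mod_cast this)
  refine ⟨v, u, z.toNat, ?_⟩
  have hMeq : M = (a : ℤ) * u + b * v := by
    have h' := congrArg (fun n : ℕ => (n : ℤ)) huv
    push_cast at h'
    rw [Int.toNat_of_nonneg hM0] at h'
    exact h'
  have hfin : (N : ℤ) = v * (b * c) + u * (a * c) + z.toNat * (a * b) := by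
    rw [Int.toNat_of_nonneg hz0]
    linear_combination key + (c : ℤ) * hMeq
  exact_mod_cast hfin

/-- for primes p1 < p2 < p3, every square with side greater than
2*p1*p2*p3 - (p1*p2 + p1*p3 + p2*p3) can be tiled with p1×p1, p2×p2 and p3×p3 squares. -/
theorem tiling_square_three_primes (p1 p2 p3 : ℕ)
    (h1 : Nat.Prime p1) (h2 : Nat.Prime p2) (h3 : Nat.Prime p3)
    (h12 : p1 < p2) (h23 : p2 < p3) :
    ∀ a : ℕ, 2 * p1 * p2 * p3 - (p1 * p2 + p1 * p3 + p2 * p3) < a →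
      Tiles {(p1, p1), (p2, p2), (p3, p3)} a a := by
  intro a ha
  have hp1 := h1.two_le
  have hp2 := h2.two_le
  have hp3 := h3.two_le
  have hc12 : Nat.Coprime p1 p2 := (Nat.coprime_primes h1 h2).2 (Nat.ne_of_lt h12)
  have hc13 : Nat.Coprime p1 p3 := (Nat.coprime_primes h1 h3).2 (Nat.ne_of_lt (h12.trans h23))
  have hc23 : Nat.Coprime p2 p3 := (Nat.coprime_primes h2 h3).2 (Nat.ne_of_lt h23)
  have hge : p1 * p2 + p1 * p3 + p2 * p3 ≤ 2 * (p1 * p2 * p3) := by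
    have e1 : p1 * p2 * 2 ≤ p1 * p2 * p3 := Nat.mul_le_mul_left _ hp3
    have e2 : p1 * p3 * 2 ≤ p1 * p3 * p2 := Nat.mul_le_mul_left _ hp2
    have e3 : p2 * p3 * 2 ≤ p2 * p3 * p1 := Nat.mul_le_mul_left _ hp1
    nlinarith [e1, e2, e3]
  have ha' : 2 * (p1 * p2 * p3) - (p1 * p2 + p1 * p3 + p2 * p3) < a := by
    have e : 2 * p1 * p2 * p3 = 2 * (p1 * p2 * p3) := by ring
    rw [e] at ha; exact ha
  have hbound : 2 * (p1 * p2 * p3) < a + (p1 * p2 + p1 * p3 + p2 * p3) := by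
    rw [Nat.add_comm a]
    have := (Nat.sub_lt_iff_lt_add hge).1 ha'; omega
  obtain ⟨x, y, z, hxyz⟩ := rep3 p1 p2 p3 a (by omega) (by omega) (by omega)
    hc12 hc13 hc23 hbound
  set B : Finset (ℕ × ℕ) := {(p1, p1), (p2, p2), (p3, p3)} with hBdef
  have m1 : (p1, p1) ∈ B := by simp [hBdef]
  have m2 : (p2, p2) ∈ B := by simp [hBdef]
  have m3 : (p3, p3) ∈ B := by simp [hBdef]
  set A1 := x * (p2 * p3) with hA1
  set A2 := y * (p1 * p3) with hA2
  set A3 := z * (p1 * p2) with hA3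
  have d2A1 : p2 ∣ A1 := ⟨x * p3, by rw [hA1]; ring⟩
  have d3A1 : p3 ∣ A1 := ⟨x * p2, by rw [hA1]; ring⟩
  have d1A2 : p1 ∣ A2 := ⟨y * p3, by rw [hA2]; ring⟩
  have d3A2 : p3 ∣ A2 := ⟨y * p1, by rw [hA2]; ring⟩
  have d1A3 : p1 ∣ A3 := ⟨z * p2, by rw [hA3]; ring⟩
  have d2A3 : p2 ∣ A3 := ⟨z * p1, by rw [hA3]; ring⟩
  have t11 : Tiles B A1 A1 := tiles_grid B p2 A1 A1 (by omega) m2 d2A1 d2A1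
  have t12 : Tiles B A1 A2 := tiles_grid B p3 A1 A2 (by omega) m3 d3A1 d3A2
  have t13 : Tiles B A1 A3 := tiles_grid B p2 A1 A3 (by omega) m2 d2A1 d2A3
  have t21 : Tiles B A2 A1 := tiles_grid B p3 A2 A1 (by omega) m3 d3A2 d3A1
  have t22 : Tiles B A2 A2 := tiles_grid B p1 A2 A2 (by omega) m1 d1A2 d1A2
  have t23 : Tiles B A2 A3 := tiles_grid B p1 A2 A3 (by omega) m1 d1A2 d1A3
  have t31 : Tiles B A3 A1 := tiles_grid B p2 A3 A1 (by omega) m2 d2A3 d2A1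
  have t32 : Tiles B A3 A2 := tiles_grid B p1 A3 A2 (by omega) m1 d1A3 d1A2
  have t33 : Tiles B A3 A3 := tiles_grid B p1 A3 A3 (by omega) m1 d1A3 d1A3
  have c1 : Tiles B A1 (A1 + A2 + A3) := tiles_add_vert (tiles_add_vert t11 t12) t13
  have c2 : Tiles B A2 (A1 + A2 + A3) := tiles_add_vert (tiles_add_vert t21 t22) t23
  have c3 : Tiles B A3 (A1 + A2 + A3) := tiles_add_vert (tiles_add_vert t31 t32) t33
  have : Tiles B (A1 + A2 + A3) (A1 + A2 + A3) :=
    tiles_add_horiz (tiles_add_horiz c1 c2) c3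
  rw [hxyz]
  exact this
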